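/- arXiv:2602.12220 — 11 statements merged into one kernel-verified Lean document; each statement's English description precedes it below -/
import Mathlib

section
/- For all natural numbers m and r with r ≤ m, the following identity holds: ∑_{i=1}^{r+1} 2^{2(i−1)} · C(m, 2(i−1)) · C(m − 2(i−1), r − i + 1) = C(2m, 2r). (This expresses that the subfile types of the pair-grouping PT design, where type v_i consists of the (2m−2r)-subsets meeting exactly 2(i−1) of the m pairs in one point and missing exactly r−i+1 pairs, partition all (2m−2r)-subsets of a 2m-element set.) -/
open Polynomial Finset

lemma aux1 (t d : ℕ) : ((1 + X^2 : Polynomial ℕ)^t).coeff d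
    = if d % 2 = 0 then t.choose (d/2) else 0 := by
  rw [add_comm, (Commute.all _ _).add_pow]
  rw [finset_sum_coeff]
  simp only [one_pow, mul_one, ← pow_mul, ← C_eq_natCast, coeff_mul_C, coeff_X_pow, Nat.cast_id]
  split_ifs with hd
  · rw [Finset.sum_eq_single (d/2)]
    · have : d = 2 * (d/2) := by omega
      simp [← this]
    · intro b _ hb
      have : ¬ d = 2 * b := by omega
      simp [this]
    · intro hh
      have h1 : d = 2 * (d/2) := by omega
      have h2 : t < d/2 := by simpa using hh
      simp [← h1, Nat.choose_eq_zero_of_lt h2]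
  · refine Finset.sum_eq_zero fun x _ => ?_
    have : ¬ d = 2 * x := by omega
    simp [this]

/-- The subfile types of the pair-grouping PT design partition all `(2m-2r)`-subsets
of a `2m`-element set:
`∑_{i=1}^{r+1} 2^{2(i−1)} · C(m, 2(i−1)) · C(m − 2(i−1), r − i + 1) = C(2m, 2r)`. -/
theorem stmt_0 (m r : ℕ) (h : r ≤ m) :
    ∑ i ∈ Finset.Icc 1 (r + 1),
        2 ^ (2 * (i - 1)) * Nat.choose m (2 * (i - 1)) *
          Nat.choose (m - 2 * (i - 1)) (r + 1 - i)
      = Nat.choose (2 * m) (2 * r) := by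
  classical
  set g : ℕ → ℕ := fun k => 2 ^ k *
    (if k ≤ 2*r ∧ (2*r - k) % 2 = 0 then (m - k).choose ((2*r - k)/2) else 0) * m.choose k
    with hg
  -- Step 1: RHS = ∑ k in range (m+1), g k
  have key : (2*m).choose (2*r) = ∑ k ∈ range (m+1), g k := by
    have h1 : ((1 + X : Polynomial ℕ)^(2*m)).coeff (2*r) = (2*m).choose (2*r) := by
      simp [coeff_one_add_X_pow]
    have h2 : ((1 + X : Polynomial ℕ))^(2*m)
        = (C 2 * X + (1 + X^2))^m := by
      rw [pow_mul]
      have : (C 2 : Polynomial ℕ) = 2 := by simp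
      rw [this]; ring
    rw [h2, (Commute.all _ _).add_pow, finset_sum_coeff] at h1
    rw [← h1]
    refine Finset.sum_congr rfl fun k hk => ?_
    rw [mul_pow, ← C_pow, mul_assoc, mul_assoc, coeff_C_mul, ← mul_assoc,
      (Commute.all (X^k) _).eq, ← C_eq_natCast, coeff_mul_C, coeff_mul_X_pow']
    rw [aux1]
    by_cases hk2 : k ≤ 2*r
    · simp only [hk2, if_true, hg]
      by_cases hpar : (2*r - k) % 2 = 0 <;> simp [hpar, hk2, mul_comm, mul_assoc, mul_left_comm]
    · simp [hk2, hg]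
  rw [key]
  -- Step 2: LHS = ∑ j in range (r+1), g (2*j)
  have lhs : ∑ i ∈ Finset.Icc 1 (r + 1),
        2 ^ (2 * (i - 1)) * Nat.choose m (2 * (i - 1)) *
          Nat.choose (m - 2 * (i - 1)) (r + 1 - i)
      = ∑ j ∈ range (r+1), g (2*j) := by
    rw [show Finset.Icc 1 (r+1) = Finset.Ico 1 (r+2) by rw [← Finset.Ico_add_one_right_eq_Icc]; rfl,
      Finset.sum_Ico_eq_sum_range]
    refine Finset.sum_congr (by norm_num) fun j hj => ?_
    simp only [Finset.mem_range] at hj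
    have h1 : 1 + j - 1 = j := by omega
    have h2 : 2*j ≤ 2*r := by omega
    have h3 : (2*r - 2*j) % 2 = 0 := by omega
    have h4 : (2*r - 2*j)/2 = r - j := by omega
    have h5 : r + 1 - (1+j) = r - j := by omega
    simp only [hg, h1, h2, h3, h4, h5, and_self, if_true]
    ring
  rw [lhs]
  -- Step 3: reindex
  have himg : ∑ j ∈ range (r+1), g (2*j) = ∑ k ∈ (range (r+1)).image (2*·), g k := by
    rw [Finset.sum_image (by intro a _ b _ hab; simp only at hab; omega)]
  rw [himg]
  have gz1 : ∀ k, m < k → g k = 0 := fun k hk => by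
    simp [hg, Nat.choose_eq_zero_of_lt hk]
  have gz2 : ∀ k, k ∉ (range (r+1)).image (2*·) → g k = 0 := by
    intro k hk
    simp only [Finset.mem_image, Finset.mem_range] at hk
    push_neg at hk
    by_cases he : k % 2 = 0
    · have : ¬ k ≤ 2*r := by
        by_contra hc
        exact (hk (k/2) (by omega)) (by omega)
      simp [hg, this]
    · by_cases hc : k ≤ 2*r
      · have : ¬ (2*r - k) % 2 = 0 := by omega
        simp [hg, hc, this]
      · simp [hg, hc]
  set N := m + 2*r + 2 with hN
  rw [Finset.sum_subset (Finset.image_subset_iff.2 fun j hj => by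
        simp only [Finset.mem_range] at hj ⊢; omega : (range (r+1)).image (2*·) ⊆ range N)
      (fun k _ hk => gz2 k hk),
    ← Finset.sum_subset (by intro k hk; simp only [Finset.mem_range] at hk ⊢; omega :
        range (m+1) ⊆ range N)
      (fun k hk hk' => gz1 k (by simp only [Finset.mem_range] at hk'; omega))]
end

section
/- Let K = 2m ≥ 4 and t̄ = 2r be even natural numbers with 1 ≤ r and 2r ≤ m, and set t = 2m − 2r. Define F_i = 2^{2(i−1)} · C(m, 2(i−1)) · C(m − 2(i−1), r − i + 1) for 1 ≤ i ≤ r + 1, and define α_1 = 0 and α_i = (∏_{k=1}^{i−1}(2k−1)) · (∏_{k=i−1}^{r−1} 2k) for 2 ≤ i ≤ r + 1 (empty products equal 1). Then min{ ∑_{i=1}^{r+1} α_i · F_i , t · (C(2m, 2r) − C(m, r)) } ≤ min{ ∏_{k=1}^{r}(2k−1) , t } · C(2m, 2r). In particular, the subpacketization F_PT of the PT design (the smaller of the two displayed quantities) satisfies F_PT ≤ F_JCM and F_PT / F_JCM ≤ min{ (1/t) ∏_{i=1}^{t̄/2}(2i−1), 1 }, where F_JCM = t · C(K, t). -/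
open Polynomial Finset

lemma key_identity (m r : ℕ) :
    (2*m).choose (2*r) = ∑ b ∈ Finset.range (m+1),
      (if b ≤ 2*r then 2^(b - (2*r - b)) * b.choose (2*r - b) else 0) * m.choose b := by
  have h0 : ((X + 1 : ℕ[X])^(2*m)).coeff (2*r) = (2*m).choose (2*r) := by
    rw [coeff_X_add_one_pow]; exact Nat.cast_id _
  have h1 : (X + 1 : ℕ[X])^(2*m) = ((X + C 2) * X + 1)^m := by
    rw [two_mul, ← two_mul m, pow_mul]
    congr 1
    simp [C_eq_natCast]
    ring
  rw [← h0, h1, add_pow, finset_sum_coeff]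
  apply Finset.sum_congr rfl
  intro b hb
  rw [one_pow, mul_one, mul_pow, ← C_eq_natCast, coeff_mul_C, coeff_mul_X_pow']
  congr 1
  split_ifs with h
  · rw [coeff_X_add_C_pow]; exact Nat.cast_id _ ▸ rfl
  · rfl

lemma sum_F_le (m r : ℕ) (hm : 2 * r ≤ m) :
    ∑ i ∈ Finset.Icc 1 (r + 1),
      (2 ^ (2 * (i - 1)) * Nat.choose m (2 * (i - 1)) *
        Nat.choose (m - 2 * (i - 1)) (r + 1 - i)) ≤ (2*m).choose (2*r) := by
  rw [key_identity m r]
  have hsub : Finset.Icc r (2*r) ⊆ Finset.range (m+1) := by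
    intro b hb; simp only [Finset.mem_Icc] at hb; simp only [Finset.mem_range]; omega
  calc ∑ i ∈ Finset.Icc 1 (r + 1),
      (2 ^ (2 * (i - 1)) * Nat.choose m (2 * (i - 1)) *
        Nat.choose (m - 2 * (i - 1)) (r + 1 - i))
      = ∑ b ∈ Finset.Icc r (2*r),
        (if b ≤ 2*r then 2^(b - (2*r - b)) * b.choose (2*r - b) else 0) * m.choose b := by
        apply Finset.sum_nbij' (fun i => r + i - 1) (fun b => b - r + 1)
        · intro i hi; simp only [Finset.mem_Icc] at *; omega
        · intro b hb; simp only [Finset.mem_Icc] at *; omega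
        · intro i hi; simp only [Finset.mem_Icc] at hi; omega
        · intro b hb; simp only [Finset.mem_Icc] at hb; omega
        · intro i hi
          simp only [Finset.mem_Icc] at hi
          obtain ⟨j, rfl⟩ : ∃ j, i = j + 1 := ⟨i - 1, by omega⟩
          have hjr : j ≤ r := by omega
          have e1 : r + (j+1) - 1 = r + j := by omega
          have e2 : 2*r - (r+j) = r - j := by omega
          have e3 : (r+j) - (r - j) = 2*j := by omega
          have e4 : r + 1 - (j+1) = r - j := by omega
          have e5 : (j+1) - 1 = j := by omega
          rw [e1, if_pos (by omega : r + j ≤ 2*r), e2, e3, e4, e5]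
          have hsymm : (r+j).choose (r - j) = (r+j).choose (2*j) := by
            have := Nat.choose_symm (show 2*j ≤ r + j by omega) (n := r + j)
            rwa [show r + j - 2*j = r - j by omega] at this
          rw [hsymm]
          have hcm := Nat.choose_mul (n := m) (show 2*j ≤ r + j by omega)
          rw [show r + j - 2*j = r - j by omega] at hcm
          rw [show 2 ^ (2*j) * (r+j).choose (2*j) * m.choose (r+j)
              = 2 ^ (2*j) * (m.choose (r+j) * (r+j).choose (2*j)) from by ring, hcm]
          ring
    _ ≤ _ := Finset.sum_le_sum_of_subset hsub

lemma alpha_le (r : ℕ) (hr : 1 ≤ r) (i : ℕ) (hi : i ∈ Finset.Icc 1 (r+1)) :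
    (if i = 1 then 0 else
      (∏ k ∈ Finset.Icc 1 (i - 1), (2 * k - 1)) *
      (∏ k ∈ Finset.Icc (i - 1) (r - 1), (2 * k)))
    ≤ ∏ k ∈ Finset.Icc 1 r, (2 * k - 1) := by
  split_ifs with h1
  · exact Nat.zero_le _
  simp only [Finset.mem_Icc] at hi
  obtain ⟨j, rfl⟩ : ∃ j, i = j + 2 := ⟨i - 2, by omega⟩
  have e5 : j + 2 - 1 = j + 1 := by omega
  rw [e5]
  have hsplit : (∏ k ∈ Finset.Icc 1 (j+1), (2 * k - 1)) *
      (∏ k ∈ Finset.Icc (j+2) r, (2 * k - 1)) = ∏ k ∈ Finset.Icc 1 r, (2 * k - 1) := by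
    have a1 : Finset.Icc 1 (j+1) = Finset.Ioc 0 (j+1) := Finset.Icc_add_one_left_eq_Ioc _ _
    have a2 : Finset.Icc (j+2) r = Finset.Ioc (j+1) r := Finset.Icc_add_one_left_eq_Ioc _ _
    have a3 : Finset.Icc 1 r = Finset.Ioc 0 r := Finset.Icc_add_one_left_eq_Ioc _ _
    rw [a1, a2, a3]
    exact Finset.prod_Ioc_consecutive _ (by omega) (by omega)
  rw [← hsplit]
  apply Nat.mul_le_mul_left
  have himg : Finset.Icc (j+2) r = Finset.image (· + 1) (Finset.Icc (j+1) (r-1)) := by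
    rw [Finset.image_add_right_Icc]
    congr 1
    omega
  rw [himg, Finset.prod_image (by intro a _ b _ h; simp only at h; omega)]
  apply Finset.prod_le_prod'
  intro k _
  omega

/-- Theorem 1 (order-wise reduction): for `K = 2m`, `t̄ = 2r` with `1 ≤ r`, `2r ≤ m`,
and `t = 2m − 2r`, the PT subpacketization
`F_PT = min{∑_{i=1}^{r+1} α_i F_i , t·(C(2m,2r) − C(m,r))}` satisfies
`F_PT ≤ min{∏_{k=1}^{r}(2k−1), t} · C(2m,2r)`, i.e. `F_PT ≤ F_JCM` and
`F_PT/F_JCM ≤ min{(1/t)∏_{i=1}^{t̄/2}(2i−1), 1}` where `F_JCM = t·C(K,t)`. -/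
theorem stmt_3 (m r : ℕ) (hr : 1 ≤ r) (hm : 2 * r ≤ m) :
    min
      (∑ i ∈ Finset.Icc 1 (r + 1),
        (if i = 1 then 0 else
          (∏ k ∈ Finset.Icc 1 (i - 1), (2 * k - 1)) *
          (∏ k ∈ Finset.Icc (i - 1) (r - 1), (2 * k))) *
        (2 ^ (2 * (i - 1)) * Nat.choose m (2 * (i - 1)) *
          Nat.choose (m - 2 * (i - 1)) (r + 1 - i)))
      ((2 * m - 2 * r) * (Nat.choose (2 * m) (2 * r) - Nat.choose m r))
    ≤ min (∏ k ∈ Finset.Icc 1 r, (2 * k - 1)) (2 * m - 2 * r) *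
        Nat.choose (2 * m) (2 * r) := by
  have hA : (∑ i ∈ Finset.Icc 1 (r + 1),
        (if i = 1 then 0 else
          (∏ k ∈ Finset.Icc 1 (i - 1), (2 * k - 1)) *
          (∏ k ∈ Finset.Icc (i - 1) (r - 1), (2 * k))) *
        (2 ^ (2 * (i - 1)) * Nat.choose m (2 * (i - 1)) *
          Nat.choose (m - 2 * (i - 1)) (r + 1 - i)))
      ≤ (∏ k ∈ Finset.Icc 1 r, (2 * k - 1)) * Nat.choose (2 * m) (2 * r) := by
    calc _ ≤ ∑ i ∈ Finset.Icc 1 (r + 1),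
          (∏ k ∈ Finset.Icc 1 r, (2 * k - 1)) *
          (2 ^ (2 * (i - 1)) * Nat.choose m (2 * (i - 1)) *
            Nat.choose (m - 2 * (i - 1)) (r + 1 - i)) := by
          apply Finset.sum_le_sum
          intro i hi
          exact Nat.mul_le_mul_right _ (alpha_le r hr i hi)
      _ = (∏ k ∈ Finset.Icc 1 r, (2 * k - 1)) *
          ∑ i ∈ Finset.Icc 1 (r + 1),
            (2 ^ (2 * (i - 1)) * Nat.choose m (2 * (i - 1)) *
              Nat.choose (m - 2 * (i - 1)) (r + 1 - i)) := (Finset.mul_sum _ _ _).symm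
      _ ≤ _ := Nat.mul_le_mul_left _ (sum_F_le m r hm)
  rcases le_total (∏ k ∈ Finset.Icc 1 r, (2 * k - 1)) (2 * m - 2 * r) with h | h
  · rw [min_eq_left h]
    exact le_trans (min_le_left _ _) hA
  · rw [min_eq_right h]
    exact le_trans (min_le_right _ _) (Nat.mul_le_mul_left _ (Nat.sub_le _ _))
end

section
/- Let C > 0 be a real number and let t̄ : ℕ → ℕ be a function such that for all sufficiently large K: t̄(K) is even, 2 ≤ t̄(K) < K, and t̄(K) ≤ C · log₂(log₂ K). Then the real sequence K ↦ (∏_{i=1}^{t̄(K)/2}(2i−1)) / (K − t̄(K)) converges to 0 as K → ∞. -/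
open Filter Topology

lemma aux_atBot (A : ℝ) :
    Tendsto (fun v : ℝ => A * (Real.log v) ^ 2 - v) atTop atBot := by
  have h0 : Tendsto (fun v : ℝ => A * ((Real.log v) ^ 2 / v) - 1) atTop (𝓝 (A * 0 - 1)) := by
    exact (((Real.tendsto_pow_log_div_mul_add_atTop 1 0 2 one_ne_zero).congr
      (by intro x; ring_nf)).const_mul A).sub_const 1
  rw [show A * (0:ℝ) - 1 = -1 by ring] at h0
  have h1 : Tendsto (fun v : ℝ => (A * ((Real.log v) ^ 2 / v) - 1) * v) atTop atBot :=
    h0.neg_mul_atTop (by norm_num) tendsto_id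
  refine h1.congr' ?_
  filter_upwards [eventually_gt_atTop (0:ℝ)] with v hv
  field_simp

/-- Vanishing subpacketization ratio (Lemma 1): if `t̄(K)` is even, `2 ≤ t̄(K) < K`,
and `t̄(K) ≤ C·log₂ log₂ K` for all sufficiently large `K`, then
`(∏_{i=1}^{t̄(K)/2}(2i−1)) / (K − t̄(K)) → 0` as `K → ∞`. -/
theorem stmt_4 (C : ℝ) (hC : 0 < C) (tb : ℕ → ℕ)
    (h : ∃ N : ℕ, ∀ K : ℕ, N ≤ K →
      Even (tb K) ∧ 2 ≤ tb K ∧ tb K < K ∧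
      (tb K : ℝ) ≤ C * Real.logb 2 (Real.logb 2 (K : ℝ))) :
    Tendsto
      (fun K : ℕ =>
        ((∏ i ∈ Finset.Icc 1 (tb K / 2), (2 * i - 1) : ℕ) : ℝ) / ((K : ℝ) - (tb K : ℝ)))
      atTop (𝓝 0) := by
  obtain ⟨N, hN⟩ := h
  have hlog2 : (0:ℝ) < Real.log 2 := Real.log_pos (by norm_num)
  set A : ℝ := 2 * C / Real.log 2 with hAdef
  have hA : 0 < A := by positivity
  -- the dominating sequence
  set g : ℕ → ℝ := fun K =>
    Real.exp (A * (Real.log (Real.log K)) ^ 2 + Real.log 2 - Real.log K) with hgdef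
  have hnat : Tendsto (fun K : ℕ => (K:ℝ)) atTop atTop := tendsto_natCast_atTop_atTop
  have hlogK : Tendsto (fun K : ℕ => Real.log K) atTop atTop :=
    Real.tendsto_log_atTop.comp hnat
  have hw : Tendsto (fun K : ℕ => Real.log (Real.log K)) atTop atTop :=
    Real.tendsto_log_atTop.comp hlogK
  have hg : Tendsto g atTop (𝓝 0) := by
    have := (aux_atBot A).comp hlogK
    have h2 : Tendsto (fun K : ℕ =>
        A * (Real.log (Real.log K)) ^ 2 + Real.log 2 - Real.log K) atTop atBot := by
      have := tendsto_atBot_add_const_right atTop (Real.log 2) this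
      exact this.congr (by intro K; simp [Function.comp]; ring)
    exact Real.tendsto_exp_atBot.comp h2
  -- eventual bounds
  have hsmall : ∀ᶠ v : ℝ in atTop, Real.log v ≤ v / (2 * max A 1) := by
    have := Real.isLittleO_log_id_atTop.def (c := 1 / (2 * max A 1)) (by positivity)
    filter_upwards [this, eventually_ge_atTop (0:ℝ)] with v hv hv0
    have h' : |Real.log v| ≤ 1 / (2 * max A 1) * |v| := by
      simpa [Real.norm_eq_abs] using hv
    calc Real.log v ≤ |Real.log v| := le_abs_self _
      _ ≤ 1 / (2 * max A 1) * |v| := h'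
      _ = 1 / (2 * max A 1) * v := by rw [abs_of_nonneg hv0]
      _ = v / (2 * max A 1) := by ring
  have e1 : ∀ᶠ K : ℕ in atTop, (1:ℝ) ≤ Real.log (Real.log K) := hw.eventually_ge_atTop 1
  have e2 : ∀ᶠ K : ℕ in atTop,
      Real.log (Real.log (K:ℝ)) ≤ Real.log K / (2 * max A 1) :=
    hlogK.eventually hsmall
  have e3 : ∀ᶠ K : ℕ in atTop, Real.log (K:ℝ) ≤ (K:ℝ) / (2 * max A 1) :=
    hnat.eventually hsmall
  have e4 : ∀ᶠ K : ℕ in atTop, N ≤ K := eventually_ge_atTop N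
  have e5 : ∀ᶠ K : ℕ in atTop, (1:ℝ) ≤ Real.log K := hlogK.eventually_ge_atTop 1
  -- squeeze
  refine squeeze_zero' ?_ ?_ hg
  · filter_upwards [e4] with K hK
    have h4 := hN K hK
    have hden : (0:ℝ) < (K:ℝ) - tb K := by
      have := h4.2.2.1
      have : (tb K : ℝ) < K := by exact_mod_cast this
      linarith
    positivity
  · filter_upwards [e1, e2, e3, e4, e5] with K h1 h2 h3 h4 h5
    obtain ⟨heven, htb2, htbK, htby⟩ := hN K h4
    set y : ℝ := C * Real.logb 2 (Real.logb 2 (K:ℝ)) with hydef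
    set w : ℝ := Real.log (Real.log K) with hwdef
    have hy2 : (2:ℝ) ≤ y := le_trans (by exact_mod_cast htb2) htby
    have hy0 : 0 < y := by linarith
    -- y ≤ A * w
    have hloglog2 : -Real.log (Real.log 2) ≤ 1 := by
      have h2e : Real.exp (-1) ≤ Real.log 2 := by
        have : Real.exp (-1) ≤ 1/2 := by
          have hm : Real.exp (-1) * Real.exp 1 = 1 := by
            rw [← Real.exp_add]; norm_num
          nlinarith [Real.exp_pos (-1), Real.exp_one_gt_d9]
        linarith [Real.log_two_gt_d9]
      have := Real.log_le_log (Real.exp_pos _) h2e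
      rw [Real.log_exp] at this
      linarith
    have hlogb : Real.logb 2 (Real.logb 2 (K:ℝ)) = (w - Real.log (Real.log 2)) / Real.log 2 := by
      rw [Real.logb, Real.logb, Real.log_div (by linarith) (ne_of_gt hlog2), hwdef]
    have hyAw : y ≤ A * w := by
      rw [hydef, hlogb, hAdef]
      have hle : C * (w - Real.log (Real.log 2)) ≤ 2 * C * w := by nlinarith
      calc C * ((w - Real.log (Real.log 2)) / Real.log 2)
          = C * (w - Real.log (Real.log 2)) / Real.log 2 := by ring
        _ ≤ 2 * C * w / Real.log 2 := by gcongr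
        _ = 2 * C / Real.log 2 * w := by ring
    have hAw : A * w ≤ max A 1 * w := by nlinarith [le_max_left A 1]
    have hylog : y ≤ Real.log K := by
      calc y ≤ A * w := hyAw
        _ ≤ max A 1 * w := hAw
        _ ≤ max A 1 * (Real.log K / (2 * max A 1)) := by
            have : (0:ℝ) < max A 1 := lt_of_lt_of_le one_pos (le_max_right A 1)
            nlinarith
        _ ≤ Real.log K := by
            have hm : (0:ℝ) < max A 1 := lt_of_lt_of_le one_pos (le_max_right A 1)
            rw [mul_div_assoc']
            rw [div_le_iff₀ (by positivity)]
            nlinarith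
    have hyK2 : y ≤ (K:ℝ) / 2 := by
      calc y ≤ Real.log K := hylog
        _ ≤ (K:ℝ) / (2 * max A 1) := h3
        _ ≤ (K:ℝ) / 2 := by
            apply div_le_div_of_nonneg_left (by positivity) (by norm_num)
            nlinarith [le_max_right A 1]
    have hK0 : (0:ℝ) < K := by
      have : (tb K : ℝ) < K := by exact_mod_cast htbK
      have : (0:ℝ) ≤ tb K := by positivity
      linarith
    have hden : (K:ℝ) / 2 ≤ (K:ℝ) - tb K := by
      have : (tb K : ℝ) ≤ (K:ℝ)/2 := le_trans htby hyK2
      linarith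
    -- numerator bound
    have hnum_nat : (∏ i ∈ Finset.Icc 1 (tb K / 2), (2 * i - 1)) ≤ tb K ^ tb K := by
      calc (∏ i ∈ Finset.Icc 1 (tb K / 2), (2 * i - 1))
          ≤ tb K ^ (Finset.Icc 1 (tb K / 2)).card := by
            apply Finset.prod_le_pow_card
            intro i hi
            simp only [Finset.mem_Icc] at hi
            have : 2 * i ≤ 2 * (tb K / 2) := by omega
            have h2m : 2 * (tb K / 2) ≤ tb K := Nat.mul_div_le _ _
            omega
        _ ≤ tb K ^ tb K := by
            apply Nat.pow_le_pow_right (by omega)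
            simp [Nat.card_Icc]
            omega
    have hnum : ((∏ i ∈ Finset.Icc 1 (tb K / 2), (2 * i - 1) : ℕ) : ℝ) ≤
        Real.exp (A * w ^ 2) := by
      have hlogy : Real.log y ≤ w := by
        rw [hwdef]
        exact Real.log_le_log hy0 hylog
      have hw0 : (0:ℝ) ≤ w := by linarith
      calc ((∏ i ∈ Finset.Icc 1 (tb K / 2), (2 * i - 1) : ℕ) : ℝ)
          ≤ ((tb K : ℕ) : ℝ) ^ (tb K : ℕ) := by exact_mod_cast hnum_nat
        _ ≤ y ^ (tb K : ℕ) := by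
            apply pow_le_pow_left₀ (by positivity) htby
        _ = y ^ ((tb K : ℕ) : ℝ) := (Real.rpow_natCast y _).symm
        _ ≤ y ^ y := Real.rpow_le_rpow_of_exponent_le (by linarith) htby
        _ = Real.exp (Real.log y * y) := Real.rpow_def_of_pos hy0 y
        _ ≤ Real.exp (A * w ^ 2) := by
            apply Real.exp_le_exp.mpr
            have hly0 : 0 ≤ Real.log y := Real.log_nonneg (by linarith)
            calc Real.log y * y ≤ w * (A * w) := by
                  apply mul_le_mul hlogy hyAw hy0.le hw0
              _ = A * w ^ 2 := by ring
    -- put together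
    calc ((∏ i ∈ Finset.Icc 1 (tb K / 2), (2 * i - 1) : ℕ) : ℝ) / ((K:ℝ) - tb K)
        ≤ Real.exp (A * w ^ 2) / ((K:ℝ) / 2) := by
          apply div_le_div₀ (Real.exp_pos _).le hnum (by positivity) hden
      _ = g K := by
          rw [hgdef]
          simp only
          rw [Real.exp_sub, Real.exp_add, Real.exp_log (by norm_num : (0:ℝ) < 2),
            Real.exp_log hK0]
          rw [← hwdef]
          ring
end

section
/- Let m, q ≥ 2 be natural numbers and K = mq. Then (q−2) · m · C(q,2) + (q−1) · C(m,2) · q² = K(q−1)(K−2)/2. Consequently, among all factorizations K = mq with m, q ≥ 2, the quantity K(q−1)(K−2)/2 is minimized exactly at q = 2, where it equals K(K−2)/2; moreover, dividing it by F_JCM = (K−2) · C(K, K−2) yields the ratio (q−1)/(K−1). -/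
lemma two_mul_choose_two (n : ℕ) : 2 * Nat.choose n 2 = n * (n - 1) := by
  induction n with
  | zero => rfl
  | succ k ih =>
    rw [Nat.choose_succ_succ, Nat.choose_one_right, Nat.mul_add, ih]
    cases k with
    | zero => rfl
    | succ j => simp only [Nat.succ_sub_one]; ring

/-- Lemma 2: for `K = mq` with `m, q ≥ 2`, the PT subpacketization with `t̄ = 2` under
the equal grouping into `m` groups of size `q` equals
`(q−2)·m·C(q,2) + (q−1)·C(m,2)·q² = K(q−1)(K−2)/2`; among all factorizations `K = m'q'`
with `m', q' ≥ 2` this quantity is minimized exactly at `q' = 2`, where it equals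
`K(K−2)/2`; and dividing by `F_JCM = (K−2)·C(K,K−2)` gives the ratio `(q−1)/(K−1)`. -/
theorem stmt_5 (m q : ℕ) (hm : 2 ≤ m) (hq : 2 ≤ q) (K : ℕ) (hK : K = m * q) :
    (q - 2) * m * Nat.choose q 2 + (q - 1) * Nat.choose m 2 * q ^ 2
        = K * (q - 1) * (K - 2) / 2 ∧
    (∀ m' q' : ℕ, 2 ≤ m' → 2 ≤ q' → m' * q' = K →
      K * (K - 2) / 2 ≤ K * (q' - 1) * (K - 2) / 2 ∧
      (K * (q' - 1) * (K - 2) / 2 = K * (K - 2) / 2 ↔ q' = 2)) ∧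
    ((K * (q - 1) * (K - 2) / 2 : ℕ) : ℚ) / (((K - 2) * Nat.choose K (K - 2) : ℕ) : ℚ)
        = ((q : ℚ) - 1) / ((K : ℚ) - 1) := by
  have hK4 : 4 ≤ K := by subst hK; nlinarith
  refine ⟨?_, ?_, ?_⟩
  · -- Part 1
    obtain ⟨a, rfl⟩ : ∃ a, q = a + 2 := ⟨q - 2, by omega⟩
    obtain ⟨b, rfl⟩ : ∃ b, m = b + 2 := ⟨m - 2, by omega⟩
    obtain ⟨c, hc⟩ : ∃ c, K = c + 2 := ⟨K - 2, by omega⟩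
    subst hc
    have h1 := two_mul_choose_two (a + 2)
    have h2 := two_mul_choose_two (b + 2)
    have key : 2 * ((a + 2 - 2) * (b + 2) * Nat.choose (a+2) 2
        + (a + 2 - 1) * Nat.choose (b+2) 2 * (a+2) ^ 2)
        = (c + 2) * (a + 2 - 1) * (c + 2 - 2) := by
      simp only [show a+2-1 = a+1 by omega, show b+2-1 = b+1 by omega,
        show a+2-2 = a by omega, show c+2-2 = c by omega] at *
      have hc2 : (b + 2) * (a + 2) = c + 2 := hK.symm
      zify at h1 h2 hc2 ⊢
      linear_combination (a * (b+2)) * h1 + ((a+1) * (a+2)^2) * h2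
        + ((a+1) * ((a+2)*(b+2) + c)) * hc2
    omega
  · -- Part 2
    intro m' q' hm' hq' hmq'
    have hle1 : K * 1 * (K - 2) ≤ K * (q' - 1) * (K - 2) :=
      Nat.mul_le_mul_right _ (Nat.mul_le_mul_left _ (by omega))
    constructor
    · refine Nat.div_le_div_right ?_
      simpa using hle1
    · constructor
      · intro h
        by_contra hne
        have hq3 : 3 ≤ q' := by omega
        have hle2 : K * 2 * (K - 2) ≤ K * (q' - 1) * (K - 2) :=
          Nat.mul_le_mul_right _ (Nat.mul_le_mul_left _ (by omega))
        have hle3 : K * 2 * (K - 2) / 2 ≤ K * (q' - 1) * (K - 2) / 2 :=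
          Nat.div_le_div_right hle2
        have e : K * 2 * (K - 2) = 2 * (K * (K - 2)) := by ring
        have hpos : 8 ≤ K * (K - 2) := by
          calc (8 : ℕ) = 4 * 2 := rfl
          _ ≤ K * (K - 2) := Nat.mul_le_mul hK4 (by omega)
        omega
      · rintro rfl
        norm_num
  · -- Part 3
    have hchoose : Nat.choose K (K - 2) = Nat.choose K 2 := by
      rw [← Nat.choose_symm (show 2 ≤ K by omega)]
    have h2K := two_mul_choose_two K
    have hev : 2 ∣ K * (q - 1) * (K - 2) := by
      rcases Nat.even_or_odd q with h | h
      · obtain ⟨k, hk⟩ := h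
        have : 2 ∣ K := ⟨m * k, by subst hK hk; ring⟩
        exact Dvd.dvd.mul_right (Dvd.dvd.mul_right this _) _
      · obtain ⟨k, hk⟩ := h
        have : 2 ∣ q - 1 := ⟨k, by omega⟩
        exact Dvd.dvd.mul_right (Dvd.dvd.mul_left this _) _
    rw [Nat.cast_div hev (by norm_num)]
    have hCq : ((Nat.choose K 2 : ℕ) : ℚ) = (K : ℚ) * ((K : ℚ) - 1) / 2 := by
      have := congrArg (fun n : ℕ => (n : ℚ)) h2K
      push_cast [Nat.cast_sub (show 1 ≤ K by omega)] at this
      linarith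
    rw [hchoose]
    push_cast [Nat.cast_sub (show 2 ≤ K by omega), Nat.cast_sub (show 1 ≤ q by omega), hCq]
    have hKQ : (4 : ℚ) ≤ (K : ℚ) := by exact_mod_cast hK4
    have h0 : (K : ℚ) ≠ 0 := by linarith
    have h1 : (K : ℚ) - 1 ≠ 0 := by intro h; linarith
    have h2 : (K : ℚ) - 2 ≠ 0 := by intro h; linarith
    field_simp
end

section
/- Let q, m, t be natural numbers, K = qm, and let S be a K-element set partitioned into m blocks each of size q. For a subset T ⊆ S, define type(T) as the multiset of intersection sizes {|T ∩ B| : B a block}. Then for every multiset v of natural numbers and every element x ∈ S: K · |{T ⊆ S : |T| = t, type(T) = v, x ∈ T}| = t · |{T ⊆ S : |T| = t, type(T) = v}|. In particular, every element of S is contained in exactly a fraction t/K of the t-subsets of any given type. -/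
open Finset

lemma aux_val_map (α : Type) [DecidableEq α] (P : Finset (Finset α))
    (f : Finset α → Finset α) (hf : Function.Injective f) (hmem : ∀ B ∈ P, f B ∈ P) :
    P.val.map f = P.val := by
  have h1 : P.image f = P := by
    apply Finset.eq_of_subset_of_card_le
    · exact Finset.image_subset_iff.2 hmem
    · rw [Finset.card_image_of_injective _ hf]
  have h2 : (P.val.map f).Nodup := P.nodup.map hf
  calc P.val.map f = (P.val.map f).dedup := (Multiset.dedup_eq_self.2 h2).symm
    _ = (P.image f).val := rfl
    _ = P.val := by rw [h1]

lemma aux_map_eq (α : Type) [DecidableEq α]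
    (P : Finset (Finset α)) (σ : α → α) (hinj : Function.Injective σ)
    (hP : P.val.map (fun B => B.image σ) = P.val) (T : Finset α) :
    Multiset.map (fun B => (B ∩ T.image σ).card) P.val
      = Multiset.map (fun B => (B ∩ T).card) P.val := by
  conv_lhs => rw [← hP, Multiset.map_map]
  apply Multiset.map_congr rfl
  intro B _
  simp only [Function.comp_apply]
  rw [← Finset.image_inter B T hinj]
  exact Finset.card_image_of_injective _ hinj

lemma aux_transfer (α : Type) [Fintype α] [DecidableEq α] (t : ℕ)
    (P : Finset (Finset α)) (v : Multiset ℕ)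
    (σ : α → α) (hinv : Function.Involutive σ)
    (hP : P.val.map (fun B => B.image σ) = P.val) (x : α) :
    Nat.card {T : Finset α //
        T.card = t ∧ Multiset.map (fun B => (B ∩ T).card) P.val = v ∧ x ∈ T}
    = Nat.card {T : Finset α //
        T.card = t ∧ Multiset.map (fun B => (B ∩ T).card) P.val = v ∧ σ x ∈ T} := by
  have hinj := hinv.injective
  have himg : Function.Involutive (fun T : Finset α => T.image σ) := by
    intro T
    simp only [Finset.image_image]
    rw [show σ ∘ σ = id from funext hinv, Finset.image_id]
  refine Nat.card_congr (Equiv.subtypeEquiv himg.toPerm fun T => ?_)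
  simp only [Function.Involutive.toPerm, Equiv.coe_fn_mk]
  rw [aux_map_eq α P σ hinj hP, Finset.card_image_of_injective _ hinj]
  have : σ x ∈ T.image σ ↔ x ∈ T := by
    constructor
    · intro h; obtain ⟨z, hz, hzx⟩ := Finset.mem_image.1 h; rwa [hinj hzx] at hz
    · intro h; exact Finset.mem_image_of_mem σ h
  rw [this]

lemma aux_exists_sigma (α : Type) [DecidableEq α] (q : ℕ)
    (P : Finset (Finset α))
    (hblock : ∀ B ∈ P, B.card = q)
    (hdisj : ∀ B ∈ P, ∀ B' ∈ P, B ≠ B' → Disjoint B B')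
    (Bx : Finset α) (hBx : Bx ∈ P) (By : Finset α) (hBy : By ∈ P)
    (x y : α) (hx : x ∈ Bx) (hy : y ∈ By) :
    ∃ σ : α → α, Function.Involutive σ ∧ σ x = y ∧ ∀ B ∈ P, B.image σ ∈ P := by
  by_cases hxy : Bx = By
  · subst hxy
    refine ⟨Equiv.swap x y, fun z => Equiv.swap_apply_self x y z, Equiv.swap_apply_left x y, ?_⟩
    intro B hB
    by_cases hB' : B = Bx
    · subst hB'
      have hsub : B.image (Equiv.swap x y) ⊆ B := by
        intro z hz
        obtain ⟨w, hw, rfl⟩ := Finset.mem_image.1 hz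
        rcases eq_or_ne w x with rfl | h1
        · rwa [Equiv.swap_apply_left]
        rcases eq_or_ne w y with rfl | h2
        · rwa [Equiv.swap_apply_right]
        · rwa [Equiv.swap_apply_of_ne_of_ne h1 h2]
      have : B.image (Equiv.swap x y) = B := by
        apply Finset.eq_of_subset_of_card_le hsub
        rw [Finset.card_image_of_injective _ (Equiv.injective _)]
      rwa [this]
    · have hd := hdisj B hB Bx hBx hB'
      have : B.image (Equiv.swap x y) = B := by
        apply Finset.image_congr (g := id) ?_ |>.trans (Finset.image_id)
        intro z hz
        have hzx : z ≠ x := fun h => (Finset.disjoint_left.1 hd) hz (h ▸ hx)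
        have hzy : z ≠ y := fun h => (Finset.disjoint_left.1 hd) hz (h ▸ hy)
        exact Equiv.swap_apply_of_ne_of_ne hzx hzy
      rwa [this]
  · have hd : Disjoint Bx By := hdisj Bx hBx By hBy hxy
    have hq : Fintype.card Bx = Fintype.card By := by
      rw [Fintype.card_coe, Fintype.card_coe, hblock Bx hBx, hblock By hBy]
    let e0 : Bx ≃ By := Fintype.equivOfCardEq hq
    let e : Bx ≃ By := e0.trans (Equiv.swap (e0 ⟨x, hx⟩) ⟨y, hy⟩)
    set σ : α → α := fun z =>
      if h : z ∈ Bx then (e ⟨z, h⟩ : α)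
      else if h : z ∈ By then (e.symm ⟨z, h⟩ : α) else z with hσ
    have hBxy : ∀ z (h : z ∈ Bx), σ z = (e ⟨z, h⟩ : α) := fun z h => dif_pos h
    have hByx : ∀ z (h : z ∈ By), σ z = (e.symm ⟨z, h⟩ : α) := by
      intro z h
      have hzBx : z ∉ Bx := Finset.disjoint_right.1 hd h
      simp only [hσ, dif_neg hzBx, dif_pos h]
    have hfix : ∀ z, z ∉ Bx → z ∉ By → σ z = z := by
      intro z h1 h2; simp only [hσ, dif_neg h1, dif_neg h2]
    have hinv : Function.Involutive σ := by
      intro z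
      by_cases h1 : z ∈ Bx
      · rw [hBxy z h1, hByx _ (e ⟨z, h1⟩).2]
        simp
      · by_cases h2 : z ∈ By
        · rw [hByx z h2, hBxy _ (e.symm ⟨z, h2⟩).2]
          simp
        · rw [hfix z h1 h2, hfix z h1 h2]
    refine ⟨σ, hinv, ?_, ?_⟩
    · rw [hBxy x hx]
      show ((e0.trans (Equiv.swap (e0 ⟨x, hx⟩) ⟨y, hy⟩)) ⟨x, hx⟩ : α) = y
      simp [Equiv.swap_apply_left]
    · intro B hB
      have hinj := hinv.injective
      by_cases h1 : B = Bx
      · subst h1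
        have hsub : B.image σ ⊆ By := by
          intro z hz
          obtain ⟨w, hw, rfl⟩ := Finset.mem_image.1 hz
          rw [hBxy w hw]; exact (e ⟨w, hw⟩).2
        have : B.image σ = By := by
          apply Finset.eq_of_subset_of_card_le hsub
          rw [Finset.card_image_of_injective _ hinj, hblock _ hBx, hblock _ hBy]
        rw [this]; exact hBy
      · by_cases h2 : B = By
        · subst h2
          have hsub : B.image σ ⊆ Bx := by
            intro z hz
            obtain ⟨w, hw, rfl⟩ := Finset.mem_image.1 hz
            rw [hByx w hw]; exact (e.symm ⟨w, hw⟩).2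
          have : B.image σ = Bx := by
            apply Finset.eq_of_subset_of_card_le hsub
            rw [Finset.card_image_of_injective _ hinj, hblock _ hBx, hblock _ hBy]
          rw [this]; exact hBx
        · have hd1 := hdisj B hB Bx hBx h1
          have hd2 := hdisj B hB By hBy h2
          have : B.image σ = B := by
            apply Finset.image_congr (g := id) ?_ |>.trans (Finset.image_id)
            intro z hz
            exact hfix z (Finset.disjoint_left.1 hd1 hz) (Finset.disjoint_left.1 hd2 hz)
          rw [this]; exact hB

lemma aux_count (α : Type) [Fintype α] [DecidableEq α]
    (p : Finset α → Prop) [DecidablePred p] (t : ℕ)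
    (ht : ∀ T, p T → T.card = t) :
    ∑ y : α, (univ.filter (fun T : Finset α => p T ∧ y ∈ T)).card
      = t * (univ.filter p).card := by
  have h1 : ∀ y : α, (univ.filter (fun T : Finset α => p T ∧ y ∈ T)).card
      = ∑ T ∈ univ.filter p, (if y ∈ T then 1 else 0) := by
    intro y
    rw [← Finset.filter_filter, Finset.card_filter]
  simp only [h1]
  rw [Finset.sum_comm]
  have h2 : ∀ T ∈ univ.filter p, ∑ y : α, (if y ∈ T then 1 else 0) = t := by
    intro T hT
    rw [Finset.sum_ite_mem, Finset.univ_inter, Finset.sum_const, smul_eq_mul, mul_one]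
    exact ht T (Finset.mem_filter.1 hT).2
  rw [Finset.sum_congr rfl h2, Finset.sum_const, smul_eq_mul, mul_comm]

/-- Cache-memory counting identity: for a `K`-element set (`K = qm`) partitioned into
`m` blocks of size `q`, with `type(T)` the multiset of block-intersection sizes, every
element `x` lies in exactly a fraction `t/K` of the `t`-subsets of any given type `v`:
`K · #{T : |T| = t, type(T) = v, x ∈ T} = t · #{T : |T| = t, type(T) = v}`. -/
theorem stmt_6 (q m t K : ℕ) (hK : K = q * m)
    (α : Type) [Fintype α] [DecidableEq α]
    (P : Finset (Finset α)) (hP : P.card = m)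
    (hblock : ∀ B ∈ P, B.card = q)
    (hdisj : ∀ B ∈ P, ∀ B' ∈ P, B ≠ B' → Disjoint B B')
    (hcover : ∀ x : α, ∃ B ∈ P, x ∈ B)
    (v : Multiset ℕ) (x : α) :
    K * Nat.card {T : Finset α //
        T.card = t ∧ Multiset.map (fun B => (B ∩ T).card) P.val = v ∧ x ∈ T}
      = t * Nat.card {T : Finset α //
          T.card = t ∧ Multiset.map (fun B => (B ∩ T).card) P.val = v} := by
  classical
  -- cardinality of α is K
  have huniv : P.biUnion (fun B => B) = (univ : Finset α) := by
    ext z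
    simp only [Finset.mem_biUnion, Finset.mem_univ, iff_true]
    exact hcover z
  have hcardα : Fintype.card α = K := by
    rw [← Finset.card_univ, ← huniv, Finset.card_biUnion hdisj]
    rw [Finset.sum_congr rfl (fun B hB => hblock B hB), Finset.sum_const, smul_eq_mul,
      hP, hK, mul_comm]
  -- the counts are independent of the chosen point
  have hNconst : ∀ y : α,
      Nat.card {T : Finset α //
        T.card = t ∧ Multiset.map (fun B => (B ∩ T).card) P.val = v ∧ y ∈ T}
      = Nat.card {T : Finset α //
        T.card = t ∧ Multiset.map (fun B => (B ∩ T).card) P.val = v ∧ x ∈ T} := by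
    intro y
    obtain ⟨Bx, hBx, hxBx⟩ := hcover x
    obtain ⟨By, hBy, hyBy⟩ := hcover y
    obtain ⟨σ, hinv, hσx, hσP⟩ := aux_exists_sigma α q P hblock hdisj Bx hBx By hBy x y hxBx hyBy
    have hval : P.val.map (fun B => B.image σ) = P.val :=
      aux_val_map α P _ (Finset.image_injective hinv.injective) hσP
    have := aux_transfer α t P v σ hinv hval x
    rw [hσx] at this
    exact this.symm
  -- convert Nat.card to filter cards
  have hrep : ∀ y : α,
      Nat.card {T : Finset α //
        T.card = t ∧ Multiset.map (fun B => (B ∩ T).card) P.val = v ∧ y ∈ T}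
      = (univ.filter (fun T : Finset α =>
          (T.card = t ∧ Multiset.map (fun B => (B ∩ T).card) P.val = v) ∧ y ∈ T)).card := by
    intro y
    rw [Nat.card_eq_fintype_card, Fintype.card_subtype]
    congr 1
    ext T
    simp [and_assoc]
  have hrep2 : Nat.card {T : Finset α //
        T.card = t ∧ Multiset.map (fun B => (B ∩ T).card) P.val = v}
      = (univ.filter (fun T : Finset α =>
          T.card = t ∧ Multiset.map (fun B => (B ∩ T).card) P.val = v)).card := by
    rw [Nat.card_eq_fintype_card, Fintype.card_subtype]
  have hsum := aux_count α
    (fun T : Finset α => T.card = t ∧ Multiset.map (fun B => (B ∩ T).card) P.val = v) t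
    (fun T h => h.1)
  calc K * Nat.card {T : Finset α //
        T.card = t ∧ Multiset.map (fun B => (B ∩ T).card) P.val = v ∧ x ∈ T}
      = ∑ y : α, Nat.card {T : Finset α //
        T.card = t ∧ Multiset.map (fun B => (B ∩ T).card) P.val = v ∧ y ∈ T} := by
        rw [Finset.sum_congr rfl (fun y _ => hNconst y), Finset.sum_const, smul_eq_mul,
          Finset.card_univ, hcardα]
    _ = ∑ y : α, (univ.filter (fun T : Finset α =>
          (T.card = t ∧ Multiset.map (fun B => (B ∩ T).card) P.val = v) ∧ y ∈ T)).card := by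
        exact Finset.sum_congr rfl (fun y _ => hrep y)
    _ = t * (univ.filter (fun T : Finset α =>
          T.card = t ∧ Multiset.map (fun B => (B ∩ T).card) P.val = v)).card := hsum
    _ = t * Nat.card {T : Finset α //
          T.card = t ∧ Multiset.map (fun B => (B ∩ T).card) P.val = v} := by rw [hrep2]
end

section
/- Let q, r ≥ 1 be natural numbers with 2r ≤ q − 1. Then ∑_{i=1}^{r} (i−1) · 2 · C(q, i−1) · C(q, 2r−i+1) + r · C(q, r)² ≤ r · C(2q, 2r). In particular, for K = 2q users and even t = 2r ≤ K/2 − 1, the PT design under the grouping (K/2, K/2) with global further-splitting factors (0, 1, 2, …, r) achieves subpacketization F_PT ≤ (1/2) · F_JCM, where F_JCM = t · C(K, t). -/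
/-- Theorem 2, Case 1 (`t = 2r ≤ K/2 − 1`, `K = 2q`): the two-group PT design with
global further-splitting factors `(0, 1, …, r)` satisfies
`∑_{i=1}^{r} (i−1)·2·C(q, i−1)·C(q, 2r−i+1) + r·C(q, r)² ≤ r·C(2q, 2r)`,
i.e. `F_PT ≤ (1/2)·F_JCM` with `F_JCM = t·C(K, t)`. -/
theorem stmt_9 (q r : ℕ) (hq : 1 ≤ q) (hr : 1 ≤ r) (h : 2 * r ≤ q - 1) :
    ∑ i ∈ Finset.Icc 1 r,
        (i - 1) * 2 * Nat.choose q (i - 1) * Nat.choose q (2 * r - i + 1)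
        + r * Nat.choose q r ^ 2
      ≤ r * Nat.choose (2 * q) (2 * r) := by
  set a : ℕ → ℕ := fun j => Nat.choose q j * Nat.choose q (2 * r - j) with ha
  have hvand : Nat.choose (2 * q) (2 * r)
      = ∑ j ∈ Finset.range (2 * r + 1), a j := by
    rw [two_mul q, Nat.add_choose_eq,
      Finset.Nat.sum_antidiagonal_eq_sum_range_succ (fun x y => Nat.choose q x * Nat.choose q y)]
  -- reindex the LHS sum
  have hL : ∑ i ∈ Finset.Icc 1 r,
        (i - 1) * 2 * Nat.choose q (i - 1) * Nat.choose q (2 * r - i + 1)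
      = ∑ j ∈ Finset.range r, 2 * j * a j := by
    rw [show Finset.Icc 1 r = Finset.Ico 1 (r + 1) by rw [Finset.Ico_add_one_right_eq_Icc],
      Finset.sum_Ico_eq_sum_range]
    apply Finset.sum_congr (by rw [Nat.add_sub_cancel])
    intro j hj
    have hj' : j < r := by have := Finset.mem_range.mp hj; omega
    have h1 : 1 + j - 1 = j := by omega
    have h2 : 2 * r - (1 + j) + 1 = 2 * r - j := by omega
    rw [h1, h2, ha]; ring
  -- split the Vandermonde sum at r and reflect the upper half
  have hsplit : ∑ j ∈ Finset.range (2 * r + 1), a j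
      = (∑ j ∈ Finset.range r, a j + a r) + ∑ j ∈ Finset.Ico (r + 1) (2 * r + 1), a j := by
    rw [← Finset.sum_range_succ, Finset.range_eq_Ico, Finset.range_eq_Ico]
    exact (Finset.sum_Ico_consecutive a (Nat.zero_le (r + 1)) (by omega : r + 1 ≤ 2 * r + 1)).symm
  have hrefl : ∑ j ∈ Finset.Ico (r + 1) (2 * r + 1), a j = ∑ j ∈ Finset.range r, a j := by
    rw [Finset.range_eq_Ico]
    refine Finset.sum_nbij' (fun j => 2 * r - j) (fun j => 2 * r - j) ?_ ?_ ?_ ?_ ?_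
    · intro x hx; simp only [Finset.mem_Ico] at hx ⊢; omega
    · intro x hx; simp only [Finset.mem_Ico] at hx ⊢; omega
    · intro x hx; simp only [Finset.mem_Ico] at hx; show 2 * r - (2 * r - x) = x; omega
    · intro x hx; simp only [Finset.mem_Ico] at hx; show 2 * r - (2 * r - x) = x; omega
    · intro x hx; simp only [Finset.mem_Ico] at hx
      have : 2 * r - (2 * r - x) = x := by omega
      rw [ha]; dsimp only; rw [this, mul_comm]
  have har : a r = Nat.choose q r ^ 2 := by
    rw [ha]; dsimp only; rw [show 2 * r - r = r by omega, sq]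
  calc ∑ i ∈ Finset.Icc 1 r,
        (i - 1) * 2 * Nat.choose q (i - 1) * Nat.choose q (2 * r - i + 1)
        + r * Nat.choose q r ^ 2
      = ∑ j ∈ Finset.range r, 2 * j * a j + r * a r := by rw [hL, har]
    _ ≤ ∑ j ∈ Finset.range r, 2 * r * a j + r * a r := by
        apply Nat.add_le_add_right
        apply Finset.sum_le_sum
        intro j hj
        exact Nat.mul_le_mul_right _ (by have := Finset.mem_range.mp hj; omega)
    _ = r * ((∑ j ∈ Finset.range r, a j + a r) + ∑ j ∈ Finset.range r, a j) := by
        have h2 : ∀ j, 2 * r * a j = r * a j + r * a j := fun j => by ring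
        simp only [h2, Finset.sum_add_distrib, Finset.mul_sum, mul_add]
        ring
    _ = r * Nat.choose (2 * q) (2 * r) := by rw [hvand, hsplit, hrefl]
end

section
/- Let q and r be natural numbers with q ≤ 2r and r ≤ q. Then ∑_{i=1}^{q−r} (2r−q+i−1) · 2 · C(q, 2r−q+i−1) · C(q, q−i+1) + r · C(q, r)² ≤ r · C(2q, 2r). In particular, for K = 2q users and even t = 2r ≥ K/2, the PT design under the grouping (K/2, K/2) with global further-splitting factors (t+1−K/2−1, …, r−1, r) achieves subpacketization F_PT ≤ (1/2) · F_JCM, where F_JCM = t · C(K, t). -/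
/-- Theorem 2, Case 2 (`t = 2r ≥ K/2`, `K = 2q`): the two-group PT design with global
further-splitting factors `(t+1−K/2−1, …, r−1, r)` satisfies
`∑_{i=1}^{q−r} (2r−q+i−1)·2·C(q, 2r−q+i−1)·C(q, q−i+1) + r·C(q, r)² ≤ r·C(2q, 2r)`,
i.e. `F_PT ≤ (1/2)·F_JCM` with `F_JCM = t·C(K, t)`. -/
theorem stmt_11 (q r : ℕ) (h1 : q ≤ 2 * r) (h2 : r ≤ q) :
    ∑ i ∈ Finset.Icc 1 (q - r),
        (2 * r - q + i - 1) * 2 * Nat.choose q (2 * r - q + i - 1) * Nat.choose q (q - i + 1)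
        + r * Nat.choose q r ^ 2
      ≤ r * Nat.choose (2 * q) (2 * r) := by
  set f : ℕ → ℕ := fun j => min j (2 * r - j) * (q.choose j * q.choose (2 * r - j)) with hf
  -- Vandermonde
  have hvdm : (2 * q).choose (2 * r)
      = ∑ j ∈ Finset.range (2 * r + 1), q.choose j * q.choose (2 * r - j) := by
    rw [two_mul q, Nat.add_choose_eq, Finset.Nat.sum_antidiagonal_eq_sum_range_succ_mk]
  -- T ≤ r * S
  have hT : ∑ j ∈ Finset.range (2 * r + 1), f j
      ≤ r * ∑ j ∈ Finset.range (2 * r + 1), q.choose j * q.choose (2 * r - j) := by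
    rw [Finset.mul_sum]
    refine Finset.sum_le_sum fun j hj => ?_
    simp only [hf]
    have hjr : j ≤ 2 * r := by simpa [Nat.lt_succ_iff] using Finset.mem_range.mp hj
    exact Nat.mul_le_mul_right _ (by omega)
  -- compute T via symmetry
  have hsplit : ∑ j ∈ Finset.range (2 * r + 1), f j
      = (∑ j ∈ Finset.range r, f j + f r) + ∑ j ∈ Finset.range r, f j := by
    have h2r1 : 2 * r + 1 = (r + 1) + r := by omega
    rw [h2r1, Finset.sum_range_add, Finset.sum_range_succ]
    congr 1
    have hrefl := Finset.sum_range_reflect f r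
    have : ∀ j ∈ Finset.range r, f (r + 1 + j) = f (r - 1 - j) := by
      intro j hj
      have hjr : j < r := Finset.mem_range.mp hj
      simp only [hf]
      have e1 : 2 * r - (r + 1 + j) = r - 1 - j := by omega
      have e2 : 2 * r - (r - 1 - j) = r + 1 + j := by omega
      rw [e1, e2, min_comm, mul_comm (q.choose (r + 1 + j))]
    rw [Finset.sum_congr rfl this, hrefl]
  -- value of f on range r and at r
  have hfr : f r = r * Nat.choose q r ^ 2 := by
    simp only [hf]
    have : 2 * r - r = r := by omega
    rw [this, min_self, sq]
  have hflt : ∀ j ∈ Finset.range r, f j = j * (q.choose j * q.choose (2 * r - j)) := by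
    intro j hj
    have hjr : j < r := Finset.mem_range.mp hj
    simp only [hf]
    congr 1
    omega
  -- LHS sum equals ∑_{j<r} 2 * f j
  have hL : ∑ i ∈ Finset.Icc 1 (q - r),
        (2 * r - q + i - 1) * 2 * Nat.choose q (2 * r - q + i - 1) * Nat.choose q (q - i + 1)
      = ∑ j ∈ Finset.range r, 2 * f j := by
    have hsub : Finset.Ico (2 * r - q) r ⊆ Finset.range r := by
      intro j hj
      simp only [Finset.mem_Ico, Finset.mem_range] at *
      omega
    have hzero : ∀ j ∈ Finset.range r, j ∉ Finset.Ico (2 * r - q) r → 2 * f j = 0 := by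
      intro j hjr hj
      simp only [Finset.mem_range, Finset.mem_Ico] at hjr hj
      have : q < 2 * r - j := by omega
      simp [hf, Nat.choose_eq_zero_of_lt this]
    rw [← Finset.sum_subset hsub hzero]
    refine Finset.sum_nbij' (fun i => 2 * r - q + i - 1) (fun j => j - (2 * r - q) + 1)
      ?_ ?_ ?_ ?_ ?_
    · intro i hi
      simp only [Finset.mem_Icc] at hi
      simp only [Finset.mem_Ico]
      omega
    · intro j hj
      simp only [Finset.mem_Ico] at hj
      simp only [Finset.mem_Icc]
      omega
    · intro i hi
      simp only [Finset.mem_Icc] at hi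
      omega
    · intro j hj
      simp only [Finset.mem_Ico] at hj
      omega
    · intro i hi
      simp only [Finset.mem_Icc] at hi
      have harg : 2 * r - (2 * r - q + i - 1) = q - i + 1 := by omega
      have hmin : min (2 * r - q + i - 1) (q - i + 1) = 2 * r - q + i - 1 := by omega
      simp only [hf, harg, hmin]
      ring
  calc ∑ i ∈ Finset.Icc 1 (q - r),
        (2 * r - q + i - 1) * 2 * Nat.choose q (2 * r - q + i - 1) * Nat.choose q (q - i + 1)
        + r * Nat.choose q r ^ 2
      = ∑ j ∈ Finset.range (2 * r + 1), f j := by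
        rw [hL, hsplit, hfr]
        simp only [two_mul, Finset.sum_add_distrib]
        ring
    _ ≤ r * ∑ j ∈ Finset.range (2 * r + 1), q.choose j * q.choose (2 * r - j) := hT
    _ = r * (2 * q).choose (2 * r) := by rw [hvdm]
end

section
/- Let m, q, t be natural numbers with 2 ≤ t, t + 1 ≤ m, and t + 1 ≤ q, and let K = mq. Then 0 < m · C(q, t) < C(K, t), and as rational numbers, (m · C(q, t)) / C(K, t) = (m · ∏_{i=0}^{t−1}(q−i)) / (∏_{i=0}^{t−1}(K−i)). Consequently, the PT design subpacketization F_PT = t · C(K, t) − t · m · C(q, t) satisfies 0 < F_PT < F_JCM and F_PT / F_JCM = 1 − (m · ∏_{i=0}^{t−1}(q−i)) / (∏_{i=0}^{t−1}(K−i)) < 1, where F_JCM = t · C(K, t). -/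
open Finset

lemma cast_desc_eq_prod (n t : ℕ) (h : t ≤ n) :
    ((n.descFactorial t : ℕ) : ℚ) = ∏ i ∈ Finset.range t, ((n : ℚ) - (i : ℚ)) := by
  rw [Nat.descFactorial_eq_prod_range, Nat.cast_prod]
  refine Finset.prod_congr rfl fun i hi => ?_
  have : i ≤ n := le_trans (le_of_lt (Finset.mem_range.mp hi)) h
  push_cast [Nat.cast_sub this]
  ring

/-- Theorem 3 (constant-factor reduction): for `K = mq` with `2 ≤ t`, `t+1 ≤ m`,
`t+1 ≤ q`, we have `0 < m·C(q,t) < C(K,t)`,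
`(m·C(q,t))/C(K,t) = (m·∏_{i=0}^{t−1}(q−i))/(∏_{i=0}^{t−1}(K−i))` as rationals, and
consequently `F_PT = t·C(K,t) − t·m·C(q,t)` satisfies `0 < F_PT < F_JCM` and
`F_PT/F_JCM = 1 − (m·∏_{i=0}^{t−1}(q−i))/(∏_{i=0}^{t−1}(K−i)) < 1`,
where `F_JCM = t·C(K,t)`. -/
theorem stmt_12 (m q t : ℕ) (ht : 2 ≤ t) (htm : t + 1 ≤ m) (htq : t + 1 ≤ q)
    (K : ℕ) (hK : K = m * q) :
    0 < m * Nat.choose q t ∧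
    m * Nat.choose q t < Nat.choose K t ∧
    ((m * Nat.choose q t : ℕ) : ℚ) / ((Nat.choose K t : ℕ) : ℚ)
      = ((m : ℚ) * ∏ i ∈ Finset.range t, ((q : ℚ) - (i : ℚ))) /
        (∏ i ∈ Finset.range t, ((K : ℚ) - (i : ℚ))) ∧
    0 < t * Nat.choose K t - t * (m * Nat.choose q t) ∧
    t * Nat.choose K t - t * (m * Nat.choose q t) < t * Nat.choose K t ∧
    ((t * Nat.choose K t - t * (m * Nat.choose q t) : ℕ) : ℚ) /
        ((t * Nat.choose K t : ℕ) : ℚ)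
      = 1 - ((m : ℚ) * ∏ i ∈ Finset.range t, ((q : ℚ) - (i : ℚ))) /
            (∏ i ∈ Finset.range t, ((K : ℚ) - (i : ℚ))) ∧
    1 - ((m : ℚ) * ∏ i ∈ Finset.range t, ((q : ℚ) - (i : ℚ))) /
        (∏ i ∈ Finset.range t, ((K : ℚ) - (i : ℚ))) < 1 := by
  have hm : 0 < m := lt_of_lt_of_le (by omega) htm
  have htq' : t ≤ q := le_trans (Nat.le_succ t) htq
  have htK : t ≤ K := by
    have : q ≤ K := by rw [hK]; exact Nat.le_mul_of_pos_left q hm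
    omega
  -- products in ℕ
  have hdq_pos : 0 < q.descFactorial t := by
    rw [Nat.descFactorial_eq_factorial_mul_choose]
    exact Nat.mul_pos (Nat.factorial_pos t) (Nat.choose_pos htq')
  -- key ℕ inequality
  have hkey : m * q.descFactorial t < K.descFactorial t := by
    have h1 : m ^ t * q.descFactorial t ≤ K.descFactorial t := by
      rw [Nat.descFactorial_eq_prod_range, Nat.descFactorial_eq_prod_range]
      have hrw : m ^ t * ∏ i ∈ Finset.range t, (q - i)
          = ∏ i ∈ Finset.range t, (m * (q - i)) := by
        simp [Finset.prod_mul_distrib, Finset.prod_const, Finset.card_range]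
      rw [hrw]
      refine Finset.prod_le_prod' fun i hi => ?_
      have hi' : i < t := Finset.mem_range.mp hi
      have h3 : m * (q - i) = m * q - m * i := Nat.mul_sub m q i
      have h4 : i ≤ m * i := Nat.le_mul_of_pos_left i hm
      rw [h3, hK]
      omega
    have h2 : m * q.descFactorial t < m ^ t * q.descFactorial t := by
      have : m < m ^ t := by
        calc m < m * m := by nlinarith
        _ = m ^ 2 := (sq m).symm
        _ ≤ m ^ t := Nat.pow_le_pow_right hm ht
      exact (Nat.mul_lt_mul_right hdq_pos).mpr this
    omega
  have hchoose : m * Nat.choose q t < Nat.choose K t := by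
    have hq : q.descFactorial t = Nat.factorial t * q.choose t := Nat.descFactorial_eq_factorial_mul_choose q t
    have hKd : K.descFactorial t = Nat.factorial t * K.choose t := Nat.descFactorial_eq_factorial_mul_choose K t
    have hf : 0 < Nat.factorial t := Nat.factorial_pos t
    rw [hq, hKd] at hkey
    nlinarith
  have hcq_pos : 0 < m * Nat.choose q t :=
    Nat.mul_pos hm (Nat.choose_pos htq')
  have hcK_pos : 0 < Nat.choose K t := Nat.choose_pos htK
  -- rational ratio
  have hprodK : (∏ i ∈ Finset.range t, ((K : ℚ) - (i : ℚ))) = ((K.descFactorial t : ℕ) : ℚ) :=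
    (cast_desc_eq_prod K t htK).symm
  have hprodq : (∏ i ∈ Finset.range t, ((q : ℚ) - (i : ℚ))) = ((q.descFactorial t : ℕ) : ℚ) :=
    (cast_desc_eq_prod q t htq').symm
  have hfne : ((Nat.factorial t : ℕ) : ℚ) ≠ 0 := by
    exact_mod_cast Nat.factorial_ne_zero t
  have hratio : ((m * Nat.choose q t : ℕ) : ℚ) / ((Nat.choose K t : ℕ) : ℚ)
      = ((m : ℚ) * ∏ i ∈ Finset.range t, ((q : ℚ) - (i : ℚ))) /
        (∏ i ∈ Finset.range t, ((K : ℚ) - (i : ℚ))) := by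
    rw [hprodK, hprodq, Nat.descFactorial_eq_factorial_mul_choose,
      Nat.descFactorial_eq_factorial_mul_choose]
    push_cast
    rw [mul_comm ((Nat.factorial t : ℚ)) ((K.choose t : ℚ))]
    rw [show (m : ℚ) * ((Nat.factorial t : ℚ) * (q.choose t : ℚ))
      = (m : ℚ) * (q.choose t : ℚ) * (Nat.factorial t : ℚ) by ring]
    rw [mul_div_mul_right _ _ hfne]
  have hF_pos : 0 < t * Nat.choose K t - t * (m * Nat.choose q t) := by
    have : t * (m * Nat.choose q t) < t * Nat.choose K t :=
      (Nat.mul_lt_mul_left (show 0 < t by omega)).mpr hchoose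
    omega
  have hF_lt : t * Nat.choose K t - t * (m * Nat.choose q t) < t * Nat.choose K t := by
    have : 0 < t * (m * Nat.choose q t) := Nat.mul_pos (by omega) hcq_pos
    omega
  have hJ_pos : (0 : ℚ) < ((t * Nat.choose K t : ℕ) : ℚ) := by
    have : 0 < t * Nat.choose K t := Nat.mul_pos (by omega) hcK_pos
    exact_mod_cast this
  have hratio2 : ((t * Nat.choose K t - t * (m * Nat.choose q t) : ℕ) : ℚ) /
        ((t * Nat.choose K t : ℕ) : ℚ)
      = 1 - ((m : ℚ) * ∏ i ∈ Finset.range t, ((q : ℚ) - (i : ℚ))) /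
            (∏ i ∈ Finset.range t, ((K : ℚ) - (i : ℚ))) := by
    rw [Nat.cast_sub (le_of_lt ((Nat.mul_lt_mul_left (show 0 < t by omega)).mpr hchoose))]
    rw [sub_div, div_self (ne_of_gt hJ_pos)]
    rw [← hratio]
    congr 1
    push_cast
    rw [mul_comm ((t : ℚ)) ((K.choose t : ℚ))]
    rw [show (t : ℚ) * ((m : ℚ) * (q.choose t : ℚ)) = (m : ℚ) * (q.choose t : ℚ) * (t : ℚ) by ring]
    rw [mul_div_mul_right _ _ (by exact_mod_cast (by omega : (t : ℕ) ≠ 0) : (t : ℚ) ≠ 0)]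
  have hlt1 : 1 - ((m : ℚ) * ∏ i ∈ Finset.range t, ((q : ℚ) - (i : ℚ))) /
        (∏ i ∈ Finset.range t, ((K : ℚ) - (i : ℚ))) < 1 := by
    have hnum : (0 : ℚ) < (m : ℚ) * ∏ i ∈ Finset.range t, ((q : ℚ) - (i : ℚ)) := by
      rw [hprodq]
      have : (0 : ℚ) < (m : ℚ) := by exact_mod_cast hm
      have : (0 : ℚ) < ((q.descFactorial t : ℕ) : ℚ) := by exact_mod_cast hdq_pos
      positivity
    have hden : (0 : ℚ) < ∏ i ∈ Finset.range t, ((K : ℚ) - (i : ℚ)) := by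
      rw [hprodK]
      have : 0 < K.descFactorial t := by
        rw [Nat.descFactorial_eq_factorial_mul_choose]
        exact Nat.mul_pos (Nat.factorial_pos t) (Nat.choose_pos htK)
      exact_mod_cast this
    have : (0 : ℚ) < ((m : ℚ) * ∏ i ∈ Finset.range t, ((q : ℚ) - (i : ℚ))) /
        (∏ i ∈ Finset.range t, ((K : ℚ) - (i : ℚ))) := div_pos hnum hden
    linarith
  exact ⟨hcq_pos, hchoose, hratio, hF_pos, hF_lt, hratio2, hlt1⟩
end

section
/- Let m ≥ 2, q, t be natural numbers with 1 ≤ t ≤ q, and let K = mq. Then m · t · C(q, t) = K · C(q−1, t−1); moreover, if K is even, then m · t · C(q, t) ≤ 2 · t · C(K/2, t). In particular, among all factorizations K = mq with m ≥ 2, the subfile-exclusion saving m·t·C(q,t) = F_JCM − F_PT of the Theorem-3 PT design is maximized by the two-group factorization m = 2 (equivalently q = K/2). -/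
lemma aux_mul_choose (q t : ℕ) (ht : 1 ≤ t) (htq : t ≤ q) :
    t * Nat.choose q t = q * Nat.choose (q - 1) (t - 1) := by
  rcases q with _ | q'
  · omega
  rcases t with _ | t'
  · omega
  simp only [Nat.succ_sub_one]
  rw [Nat.add_one_mul_choose_eq, mul_comm]

/-- The subfile-exclusion saving of the Theorem-3 PT design: for `K = mq`, `m ≥ 2`,
`1 ≤ t ≤ q`, we have `m·t·C(q,t) = K·C(q−1,t−1)`, and if `K` is even then
`m·t·C(q,t) ≤ 2·t·C(K/2,t)`; i.e. the saving `F_JCM − F_PT = m·t·C(q,t)` is maximized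
by the two-group factorization `m = 2`. -/
theorem stmt_14 (m q t : ℕ) (hm : 2 ≤ m) (ht : 1 ≤ t) (htq : t ≤ q)
    (K : ℕ) (hK : K = m * q) :
    m * t * Nat.choose q t = K * Nat.choose (q - 1) (t - 1) ∧
    (Even K → m * t * Nat.choose q t ≤ 2 * t * Nat.choose (K / 2) t) := by
  have h1 : t * Nat.choose q t = q * Nat.choose (q - 1) (t - 1) :=
    aux_mul_choose q t ht htq
  constructor
  · rw [hK, mul_assoc, h1]; ring
  · intro hE
    have hqK : q ≤ K / 2 := by
      have : 2 * q ≤ K := by rw [hK]; exact Nat.mul_le_mul_right q hm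
      omega
    have htK : t ≤ K / 2 := le_trans htq hqK
    have h2 : t * Nat.choose (K / 2) t = (K / 2) * Nat.choose (K / 2 - 1) (t - 1) :=
      aux_mul_choose (K / 2) t ht htK
    have hmono : Nat.choose (q - 1) (t - 1) ≤ Nat.choose (K / 2 - 1) (t - 1) :=
      Nat.choose_le_choose _ (by omega)
    have hK2 : 2 * (K / 2) = K := Nat.two_mul_div_two_of_even hE
    calc m * t * Nat.choose q t = K * Nat.choose (q - 1) (t - 1) := by
          rw [hK, mul_assoc, h1]; ring
      _ ≤ K * Nat.choose (K / 2 - 1) (t - 1) := Nat.mul_le_mul_left K hmono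
      _ = 2 * ((K / 2) * Nat.choose (K / 2 - 1) (t - 1)) := by rw [← mul_assoc, hK2]
      _ = 2 * t * Nat.choose (K / 2) t := by rw [← h2]; ring
end

section
/- Let m ≥ 3 be a natural number and K = 3m. Then 4 · 27 · C(m, 3) + 3 · 9 · m(m−1) = 9 m(m−1)(2m−1) = K(K−3)(2K−3)/3, and as rational numbers, this quantity divided by (K−3) · C(K, 3) equals 2(2K−3) / ((K−1)(K−2)); in particular the ratio is Θ(4/K), an order-wise reduction. -/
open Filter Topology

lemma six_mul_choose_three (n : ℕ) : 6 * Nat.choose n 3 = n * (n - 1) * (n - 2) := by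
  have h := Nat.descFactorial_eq_factorial_mul_choose n 3
  simp [Nat.descFactorial_succ, Nat.descFactorial_zero, Nat.factorial] at h
  calc 6 * Nat.choose n 3 = (n - 2) * ((n - 1) * n) := h.symm
    _ = n * (n - 1) * (n - 2) := by ring

/-- PT design for `t̄ = 3` under equal grouping of `K = 3m` users into `m` groups of
size `3`: `4·27·C(m,3) + 3·9·m(m−1) = 9m(m−1)(2m−1) = K(K−3)(2K−3)/3`; dividing by
`F_JCM = (K−3)·C(K,3)` gives `2(2K−3)/((K−1)(K−2))`, which is `Θ(4/K)`
(i.e. `K · ratio → 4`), an order-wise reduction. -/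
theorem stmt_17 (m : ℕ) (hm : 3 ≤ m) (K : ℕ) (hK : K = 3 * m) :
    4 * 27 * Nat.choose m 3 + 3 * 9 * (m * (m - 1)) = 9 * m * (m - 1) * (2 * m - 1) ∧
    9 * m * (m - 1) * (2 * m - 1) = K * (K - 3) * (2 * K - 3) / 3 ∧
    ((9 * m * (m - 1) * (2 * m - 1) : ℕ) : ℚ) / (((K - 3) * Nat.choose K 3 : ℕ) : ℚ)
      = 2 * (2 * (K : ℚ) - 3) / (((K : ℚ) - 1) * ((K : ℚ) - 2)) ∧
    Tendsto
      (fun n : ℕ => (n : ℝ) * (2 * (2 * (n : ℝ) - 3) / (((n : ℝ) - 1) * ((n : ℝ) - 2))))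
      atTop (𝓝 4) := by
  obtain ⟨a, rfl⟩ : ∃ a, m = a + 3 := ⟨m - 3, by omega⟩
  subst hK
  have hcm : 6 * Nat.choose (a + 3) 3 = (a + 3) * (a + 2) * (a + 1) := by
    have h := six_mul_choose_three (a + 3)
    have e1 : a + 3 - 1 = a + 2 := by omega
    have e2 : a + 3 - 2 = a + 1 := by omega
    rwa [e1, e2] at h
  have hcK : 6 * Nat.choose (3 * (a + 3)) 3 = (3 * a + 9) * (3 * a + 8) * (3 * a + 7) := by
    have h := six_mul_choose_three (3 * (a + 3))
    have e1 : 3 * (a + 3) - 1 = 3 * a + 8 := by omega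
    have e2 : 3 * (a + 3) - 2 = 3 * a + 7 := by omega
    have e3 : 3 * (a + 3) = 3 * a + 9 := by omega
    rwa [e1, e2, e3] at h
  have e1 : a + 3 - 1 = a + 2 := by omega
  have e3 : 2 * (a + 3) - 1 = 2 * a + 5 := by omega
  have e4 : 3 * (a + 3) - 3 = 3 * a + 6 := by omega
  have e5 : 2 * (3 * (a + 3)) - 3 = 6 * a + 15 := by omega
  refine ⟨?_, ?_, ?_, ?_⟩
  · rw [e1, e3]
    have h108 : 4 * 27 * Nat.choose (a + 3) 3 = 18 * ((a + 3) * (a + 2) * (a + 1)) := by omega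
    rw [h108]; ring
  · rw [e1, e3, e4, e5]
    have : 3 * (a + 3) * (3 * a + 6) * (6 * a + 15)
        = 3 * (9 * (a + 3) * (a + 2) * (2 * a + 5)) := by ring
    rw [this, Nat.mul_div_cancel_left _ (by norm_num)]
  · rw [e1, e3, e4]
    have hq : (Nat.choose (3 * (a + 3)) 3 : ℚ)
        = ((3 * (a : ℚ) + 9) * (3 * a + 8) * (3 * a + 7)) / 6 := by
      have h := congrArg (fun x : ℕ => (x : ℚ)) hcK
      push_cast at h
      linarith
    push_cast [hq]
    have ha : (0 : ℚ) ≤ (a : ℚ) := Nat.cast_nonneg a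
    rw [div_eq_div_iff]
    · ring
    · positivity
    · refine ne_of_gt ?_
      nlinarith [ha]
  · have h1 : Tendsto (fun n : ℕ => 1 / (n : ℝ)) atTop (𝓝 0) :=
      tendsto_one_div_atTop_nhds_zero_nat
    have hnum : Tendsto (fun n : ℕ => 4 - 6 * (1 / (n : ℝ))) atTop (𝓝 (4 : ℝ)) := by
      have := (tendsto_const_nhds (x := (4:ℝ)) (f := atTop (α := ℕ))).sub (h1.const_mul 6)
      simpa using this
    have hden : Tendsto (fun n : ℕ => (1 - 1 / (n : ℝ)) * (1 - 2 * (1 / (n : ℝ)))) atTop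
        (𝓝 (1 : ℝ)) := by
      have ha' : Tendsto (fun n : ℕ => 1 - 1 / (n : ℝ)) atTop (𝓝 (1 : ℝ)) := by
        have := (tendsto_const_nhds (x := (1:ℝ)) (f := atTop (α := ℕ))).sub h1
        simpa using this
      have hb : Tendsto (fun n : ℕ => 1 - 2 * (1 / (n : ℝ))) atTop (𝓝 (1 : ℝ)) := by
        have := (tendsto_const_nhds (x := (1:ℝ)) (f := atTop (α := ℕ))).sub (h1.const_mul 2)
        simpa using this
      have := ha'.mul hb
      simpa using this
    have hlim := hnum.div hden one_ne_zero
    simp only [div_one] at hlim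
    refine hlim.congr' ?_
    filter_upwards [eventually_ge_atTop 3] with n hn
    have hn0 : (3 : ℝ) ≤ (n : ℝ) := by exact_mod_cast hn
    have h1' : (n : ℝ) - 1 ≠ 0 := by linarith
    have h2' : (n : ℝ) - 2 ≠ 0 := by linarith
    have h3' : (n : ℝ) ≠ 0 := by linarith
    simp only [Pi.div_apply]
    field_simp
    ring
end

section
/- Let K ≥ 10 be an even natural number and q = K/2. Then 2 · C(q, 3) · q + 2 · C(q, 2)² = K²(K−2)(5K−14)/96, and as rational numbers, this quantity divided by 4 · C(K, 4) equals K(5K−14) / (16(K−1)(K−3)); moreover K(5K−14)/(16(K−1)(K−3)) ≤ 5/14 for all even K ≥ 10, and it converges to 5/16 as K → ∞. -/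
open Filter Topology

set_option maxHeartbeats 1000000 in
/-- PT design for `t = 4` under two-group grouping of even `K ≥ 10` users into two
groups of size `q = K/2`: `2·C(q,3)·q + 2·C(q,2)² = K²(K−2)(5K−14)/96`; dividing by
`F_JCM = 4·C(K,4)` gives `K(5K−14)/(16(K−1)(K−3))`, which is at most `5/14` for all
even `K ≥ 10` and converges to `5/16` as `K → ∞`. -/
theorem stmt_19 :
    (∀ K : ℕ, Even K → 10 ≤ K →
      2 * Nat.choose (K / 2) 3 * (K / 2) + 2 * Nat.choose (K / 2) 2 ^ 2
          = K ^ 2 * (K - 2) * (5 * K - 14) / 96 ∧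
      ((2 * Nat.choose (K / 2) 3 * (K / 2) + 2 * Nat.choose (K / 2) 2 ^ 2 : ℕ) : ℚ) /
          ((4 * Nat.choose K 4 : ℕ) : ℚ)
        = (K : ℚ) * (5 * (K : ℚ) - 14) / (16 * ((K : ℚ) - 1) * ((K : ℚ) - 3)) ∧
      (K : ℝ) * (5 * (K : ℝ) - 14) / (16 * ((K : ℝ) - 1) * ((K : ℝ) - 3)) ≤ 5 / 14) ∧
    Tendsto
      (fun K : ℕ => (K : ℝ) * (5 * (K : ℝ) - 14) / (16 * ((K : ℝ) - 1) * ((K : ℝ) - 3)))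
      atTop (𝓝 (5 / 16)) := by
  constructor
  · intro K hEven hK
    obtain ⟨m, hm⟩ : ∃ m, K = 2 * m + 10 := by
      obtain ⟨r, hr⟩ := hEven
      exact ⟨r - 5, by omega⟩
    subst hm
    have hq : (2 * m + 10) / 2 = m + 5 := by omega
    rw [hq]
    have hda : Nat.descFactorial (m+5) 3 = (m+3)*(m+4)*(m+5) := by
      simp [Nat.descFactorial_succ]; ring
    have hdb : Nat.descFactorial (m+5) 2 = (m+4)*(m+5) := by
      simp [Nat.descFactorial_succ]
    have hdc : Nat.descFactorial (2*m+10) 4 = (2*m+10)*(2*m+9)*(2*m+8)*(2*m+7) := by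
      simp [Nat.descFactorial_succ]; ring_nf
    have ha : 6 * Nat.choose (m + 5) 3 = (m + 3) * (m + 4) * (m + 5) := by
      rw [← hda, Nat.descFactorial_eq_factorial_mul_choose]
      norm_num [Nat.factorial]
    have hb : 2 * Nat.choose (m + 5) 2 = (m + 4) * (m + 5) := by
      rw [← hdb, Nat.descFactorial_eq_factorial_mul_choose]
      norm_num [Nat.factorial]
    have hc : 24 * Nat.choose (2 * m + 10) 4
        = (2*m+10) * (2*m+9) * (2*m+8) * (2*m+7) := by
      rw [← hdc, Nat.descFactorial_eq_factorial_mul_choose]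
      norm_num [Nat.factorial]
    refine ⟨?_, ?_, ?_⟩
    · have h1 : (2*m+10) - 2 = 2*m+8 := by omega
      have h2 : 5 * (2*m+10) - 14 = 10*m+36 := by omega
      rw [h1, h2]
      symm
      apply Nat.div_eq_of_eq_mul_left (by norm_num)
      zify
      zify at ha hb
      set a := ((Nat.choose (m + 5) 3 : ℤ)) with hadef
      set b := ((Nat.choose (m + 5) 2 : ℤ)) with hbdef
      linear_combination (-32 * ((m:ℤ)+5)) * ha + (-48 * (2*b + ((m:ℤ)+4)*((m:ℤ)+5))) * hb
    · have ha' : (Nat.choose (m + 5) 3 : ℚ) = ((m:ℚ)+3)*((m:ℚ)+4)*((m:ℚ)+5) / 6 := by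
        have h := congrArg (Nat.cast : ℕ → ℚ) ha
        push_cast at h
        field_simp
        linarith
      have hb' : (Nat.choose (m + 5) 2 : ℚ) = ((m:ℚ)+4)*((m:ℚ)+5) / 2 := by
        have h := congrArg (Nat.cast : ℕ → ℚ) hb
        push_cast at h
        field_simp
        linarith
      have hc' : (Nat.choose (2*m+10) 4 : ℚ)
          = (2*(m:ℚ)+10)*(2*(m:ℚ)+9)*(2*(m:ℚ)+8)*(2*(m:ℚ)+7) / 24 := by
        have h := congrArg (Nat.cast : ℕ → ℚ) hc
        push_cast at h
        field_simp
        linarith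
      push_cast [ha', hb', hc']
      have e1 : (2*(m:ℚ)+10-1) = 2*(m:ℚ)+9 := by ring
      have e3 : (2*(m:ℚ)+10-3) = 2*(m:ℚ)+7 := by ring
      rw [e1, e3, div_eq_div_iff (by positivity) (by positivity)]
      ring
    · push_cast
      have e1 : (2*(m:ℝ)+10-1) = 2*(m:ℝ)+9 := by ring
      have e3 : (2*(m:ℝ)+10-3) = 2*(m:ℝ)+7 := by ring
      rw [e1, e3, div_le_div_iff₀ (by positivity) (by norm_num)]
      have hx : (0:ℝ) ≤ (m:ℝ) := Nat.cast_nonneg m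
      nlinarith [sq_nonneg ((m:ℝ))]
  · have hcongr : ∀ᶠ K : ℕ in atTop,
        (K : ℝ) * (5 * (K : ℝ) - 14) / (16 * ((K : ℝ) - 1) * ((K : ℝ) - 3))
          = (5 - 14 / (K:ℝ)) / (16 * (1 - 1/(K:ℝ)) * (1 - 3/(K:ℝ))) := by
      filter_upwards [eventually_ge_atTop 4] with K hK
      have hK4 : (4:ℝ) ≤ (K:ℝ) := by exact_mod_cast hK
      have hK0 : (K:ℝ) ≠ 0 := by linarith
      have h1 : (K:ℝ) - 1 ≠ 0 := by linarith
      have h3 : (K:ℝ) - 3 ≠ 0 := by linarith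
      field_simp
    refine Tendsto.congr' (hcongr.mono fun K h => h.symm) ?_
    have hinv : Tendsto (fun K : ℕ => 1/(K:ℝ)) atTop (𝓝 0) := by
      exact tendsto_one_div_atTop_nhds_zero_nat
    have hnum : Tendsto (fun K : ℕ => 5 - 14 / (K:ℝ)) atTop (𝓝 5) := by
      have h : Tendsto (fun K : ℕ => 14 / (K:ℝ)) atTop (𝓝 0) := by
        have := hinv.const_mul (14:ℝ)
        simpa [div_eq_mul_inv, mul_comm] using this
      simpa using (tendsto_const_nhds.sub h)
    have hden : Tendsto (fun K : ℕ => 16 * (1 - 1/(K:ℝ)) * (1 - 3/(K:ℝ))) atTop (𝓝 16) := by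
      have h1 : Tendsto (fun K : ℕ => 1 - 1/(K:ℝ)) atTop (𝓝 1) := by
        simpa using tendsto_const_nhds.sub hinv
      have h3 : Tendsto (fun K : ℕ => 1 - 3/(K:ℝ)) atTop (𝓝 1) := by
        have h : Tendsto (fun K : ℕ => 3 / (K:ℝ)) atTop (𝓝 0) := by
          have := hinv.const_mul (3:ℝ)
          simpa [div_eq_mul_inv, mul_comm] using this
        simpa using tendsto_const_nhds.sub h
      have := (h1.const_mul (16:ℝ)).mul h3
      simpa using this
    have := hnum.div hden (by norm_num)
    exact this
end
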